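/- The componentwise addition map m_C : C^{(N)}_{k₁,l₁} × C^{(N)}_{k₂,l₂} → C^{(N)}_{k₁+k₂,l₁+l₂} is well-defined and surjective. Moreover, if (a;b) ∈ C^{(N)}_{k,l'} and (l,l'',l') is an admissible triple of level k written as a sum (l,l'',l') = (l₁,l₁'',l₁') + (l₂,l₂'',l₂') of admissible triples of levels k₁ and k₂ with k₁ + k₂ = k, then there exist (a⁽¹⁾;b⁽¹⁾) ∈ C^{(N)}_{k₁,l₁'} and (a⁽²⁾;b⁽²⁾) ∈ C^{(N)}_{k₂,l₂'} such that (a⁽¹⁾;b⁽¹⁾) + (a⁽²⁾;b⁽²⁾) = (a;b) and c_C(l₁,l₁'',l₁')(a⁽¹⁾;b⁽¹⁾) + c_C(l₂,l₂'',l₂')(a⁽²⁾;b⁽²⁾) = c_C(l,l'',l')(a;b). -/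

import Mathlib

/-- `(α,β,γ)` is an admissible Verlinde triple of level `k`. -/
def IsAdm (k α β γ : ℕ) : Prop :=
  ∃ x y z : ℕ, x + y + z ≤ k ∧ α = x + y ∧ β = y + z ∧ γ = x + z
/-- `x(α,β,γ) = (α+γ-β)/2` (exact on admissible triples). -/
def xA (α β γ : ℕ) : ℕ := (α + γ - β) / 2
/-- `y(α,β,γ) = (α+β-γ)/2` (exact on admissible triples). -/
def yA (α β γ : ℕ) : ℕ := (α + β - γ) / 2
/-- `z(α,β,γ) = (β+γ-α)/2` (exact on admissible triples). -/
def zA (α β γ : ℕ) : ℕ := (β + γ - α) / 2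
/-- `a, b : ℕ → ℕ` represent a combinatorial path
`(a_{N-1},…,a_0; b_{N-1},…,b_1)` of length `N`, level `k` and weight `l`:
`b 0 = 0` is a dummy value, entries vanish from index `N` on, and the
conventions `b_{-1} = l`, `b_∞ = k`, `a_{-1} = a_∞ = 0` are built into the
inequalities (the cases `i = -1` and `j = ∞` of the trapezoid condition are
listed separately). -/
def IsCombPath (k l N : ℕ) (a b : ℕ → ℕ) : Prop :=
  (∀ i, a i ≤ k) ∧ (∀ i, b i ≤ k) ∧
  b 0 = 0 ∧
  (∀ i, N ≤ i → a i = 0) ∧ (∀ i, N ≤ i → b i = 0) ∧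
  a 0 ≤ l ∧
  (∀ i, a i + b (i + 1) + a (i + 1) ≤ k) ∧
  (∀ i, b i + a i + b (i + 1) ≤ k) ∧
  (∀ i j : ℕ, i < j →
    ∑ s ∈ Finset.Icc i j, b s ≤ k + ∑ s ∈ Finset.Ico (i + 1) (j - 1), a s) ∧
  (∀ j : ℕ, l + ∑ s ∈ Finset.Icc 0 j, b s ≤ k + ∑ s ∈ Finset.Ico 0 (j - 1), a s) ∧
  (∀ i : ℕ, (∑ s ∈ Finset.Icc i N, b s) + k ≤ k + ∑ s ∈ Finset.Icc (i + 1) N, a s) ∧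
  (l + (∑ s ∈ Finset.Icc 0 N, b s) + k ≤ k + ∑ s ∈ Finset.Icc 0 N, a s)
/-- The concatenation map `c_C(l,l'',l')` on combinatorial paths: it appends
`a = y(l,l'',l')` as the new index-`0` entry of the `a`-sequence and
`b = z(l,l'',l') - (a 0 - x(l,l'',l'))⁺` as the new index-`1` entry of the
`b`-sequence, shifting all previous indices up by one. -/
def concatC (l l'' l' : ℕ) (a b : ℕ → ℕ) : (ℕ → ℕ) × (ℕ → ℕ) :=
  (fun i => if i = 0 then yA l l'' l' else a (i - 1),
   fun i => if i = 0 then 0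
     else if i = 1 then zA l l'' l' - (a 0 - xA l l'' l') else b (i - 1))

lemma sum_Icc_shift (g : ℕ → ℕ) (i j : ℕ) :
    ∑ s ∈ Finset.Icc (i+1) (j+1), g s = ∑ s ∈ Finset.Icc i j, g (s+1) := by
  rw [← Finset.map_add_right_Icc, Finset.sum_map]; rfl

lemma sum_Ico_shift (g : ℕ → ℕ) (i j : ℕ) :
    ∑ s ∈ Finset.Ico (i+1) (j+1), g s = ∑ s ∈ Finset.Ico i j, g (s+1) := by
  rw [← Finset.map_add_right_Ico, Finset.sum_map]; rfl

lemma sum_Icc_bot (g : ℕ → ℕ) {i j : ℕ} (h : i ≤ j) :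
    ∑ s ∈ Finset.Icc i j, g s = g i + ∑ s ∈ Finset.Icc (i+1) j, g s := by
  rw [Finset.Icc_add_one_left_eq_Ioc, ← Finset.sum_Ioc_add_eq_sum_Icc h]; ring

lemma sum_Ico_bot (g : ℕ → ℕ) {i j : ℕ} (h : i < j) :
    ∑ s ∈ Finset.Ico i j, g s = g i + ∑ s ∈ Finset.Ico (i+1) j, g s :=
  Finset.sum_eq_sum_Ico_succ_bot h g

lemma adm_x {k α β γ : ℕ} (h : IsAdm k α β γ) :
    xA α β γ + yA α β γ = α ∧ yA α β γ + zA α β γ = β ∧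
      xA α β γ + zA α β γ = γ ∧ xA α β γ + yA α β γ + zA α β γ ≤ k := by
  obtain ⟨x, y, z, h1, rfl, rfl, rfl⟩ := h
  have hx : xA (x+y) (y+z) (x+z) = x := by unfold xA; omega
  have hy : yA (x+y) (y+z) (x+z) = y := by unfold yA; omega
  have hz : zA (x+y) (y+z) (x+z) = z := by unfold zA; omega
  rw [hx, hy, hz]; omega

lemma triple_split {k₁ k₂ α β γ αA αB pA pB : ℕ}
    (hadm : IsAdm (k₁+k₂) α β γ) (hα : α = αA + αB)
    (hA : αA ≤ k₁) (hB : αB ≤ k₂) (hpA : pA ≤ αA) (hpB : pB ≤ αB) :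
    ∃ βA γA βB γB, IsAdm k₁ αA βA γA ∧ IsAdm k₂ αB βB γB ∧
      β = βA + βB ∧ γ = γA + γB ∧
      (yA αA βA γA - pA) + (yA αB βB γB - pB) = yA α β γ - (pA + pB) := by
  obtain ⟨X, Y, Z, hk, h1, h2, h3⟩ := hadm
  have hYval : yA α β γ = Y := by subst h1 h2 h3; unfold yA; omega
  -- choose t = Y_A
  obtain ⟨t, ht⟩ : ∃ t, (αA ≤ X + t) ∧ t ≤ αA ∧ t ≤ Y ∧
      ((pA + pB ≤ Y ∧ pA ≤ t ∧ t + pB ≤ Y) ∨ (Y < pA + pB ∧ t ≤ pA ∧ Y ≤ t + pB)) := by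
    rcases le_or_gt (pA + pB) Y with hc | hc
    · rcases le_total pA (αA - X) with h | h
      · exact ⟨αA - X, by omega⟩
      · exact ⟨pA, by omega⟩
    · rcases le_total (Y - pB) (αA - X) with h | h
      · exact ⟨αA - X, by omega⟩
      · exact ⟨Y - pB, by omega⟩
  -- choose Z_A
  obtain ⟨u, hu⟩ : ∃ u, u ≤ Z ∧ αA + u ≤ k₁ ∧ αB + (Z - u) ≤ k₂ := by
    rcases le_total Z (k₁ - αA) with h | h
    · exact ⟨Z, by omega⟩
    · exact ⟨k₁ - αA, by omega⟩
  refine ⟨t + u, (αA - t) + u, (Y - t) + (Z - u), (X - (αA - t)) + (Z - u),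
    ⟨αA - t, t, u, by omega, by omega, rfl, rfl⟩,
    ⟨X - (αA - t), Y - t, Z - u, by omega, by omega, rfl, rfl⟩, by omega, by omega, ?_⟩
  have e1 : yA αA (t + u) ((αA - t) + u) = t := by unfold yA; omega
  have e2 : yA αB ((Y - t) + (Z - u)) ((X - (αA - t)) + (Z - u)) = Y - t := by
    unfold yA; omega
  rw [e1, e2, hYval]; omega

lemma add_path {k₁ k₂ l₁ l₂ N : ℕ} {a₁ b₁ a₂ b₂ : ℕ → ℕ}
    (h₁ : IsCombPath k₁ l₁ N a₁ b₁) (h₂ : IsCombPath k₂ l₂ N a₂ b₂) :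
    IsCombPath (k₁ + k₂) (l₁ + l₂) N (a₁ + a₂) (b₁ + b₂) := by
  obtain ⟨p1,p2,p3,p4,p5,p6,p7,p8,p9,p10,p11,p12⟩ := h₁
  obtain ⟨q1,q2,q3,q4,q5,q6,q7,q8,q9,q10,q11,q12⟩ := h₂
  refine ⟨fun i => ?_, fun i => ?_, ?_, fun i hi => ?_, fun i hi => ?_, ?_,
    fun i => ?_, fun i => ?_, fun i j hij => ?_, fun j => ?_, fun i => ?_, ?_⟩ <;>
    simp only [Pi.add_apply, Finset.sum_add_distrib]
  · exact Nat.add_le_add (p1 i) (q1 i)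
  · exact Nat.add_le_add (p2 i) (q2 i)
  · omega
  · rw [p4 i hi, q4 i hi]
  · rw [p5 i hi, q5 i hi]
  · omega
  · have := p7 i; have := q7 i; omega
  · have := p8 i; have := q8 i; omega
  · have := p9 i j hij; have := q9 i j hij; omega
  · have := p10 j; have := q10 j; omega
  · have := p11 i; have := q11 i; omega
  · omega

lemma concat_isPath {k l l'' l' N : ℕ} {a b : ℕ → ℕ} (hN : 1 ≤ N)
    (hadm : IsAdm k l l'' l') (hp : IsCombPath k l' N a b) :
    IsCombPath k l (N+1) (concatC l l'' l' a b).1 (concatC l l'' l' a b).2 := by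
  obtain ⟨hx, hyz, hxz, hk⟩ := adm_x hadm
  obtain ⟨p1,p2,p3,p4,p5,p6,p7,p8,p9,p10,p11,p12⟩ := hp
  set x := xA l l'' l' with hxd
  set y := yA l l'' l' with hyd
  set z := zA l l'' l' with hzd
  set A := (concatC l l'' l' a b).1 with hAd
  set B := (concatC l l'' l' a b).2 with hBd
  have hA0 : A 0 = y := by simp [hAd, concatC, hyd]
  have hAs : ∀ i, A (i+1) = a i := fun i => by simp [hAd, concatC]
  have hB0 : B 0 = 0 := by simp [hBd, concatC]
  have hB1 : B 1 = z - (a 0 - x) := by simp [hBd, concatC, hzd, hxd]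
  have hBs : ∀ i, B (i+2) = b (i+1) := fun i => by simp [hBd, concatC]
  have s01 : ∀ g : ℕ → ℕ, ∑ s ∈ Finset.Icc 0 1, g s = g 0 + g 1 := by
    intro g
    rw [sum_Icc_bot g (by norm_num), Finset.Icc_self, Finset.sum_singleton]
  -- old (D) at j = 1 : l' + b 1 ≤ k
  have hD1 : l' + b 1 ≤ k := by
    have := p10 1
    rw [s01 b, p3] at this
    simpa using this
  -- sum conversion lemmas
  have SA1 : ∀ i j, ∑ s ∈ Finset.Icc (i+1) (j+1), A s = ∑ s ∈ Finset.Icc i j, a s := by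
    intro i j
    rw [sum_Icc_shift]
    exact Finset.sum_congr rfl fun s _ => hAs s
  have TA1 : ∀ i j, ∑ s ∈ Finset.Ico (i+1) (j+1), A s = ∑ s ∈ Finset.Ico i j, a s := by
    intro i j
    rw [sum_Ico_shift]
    exact Finset.sum_congr rfl fun s _ => hAs s
  have SA0 : ∀ j, ∑ s ∈ Finset.Icc 0 (j+1), A s = y + ∑ s ∈ Finset.Icc 0 j, a s := by
    intro j
    rw [sum_Icc_bot A (by omega), hA0, SA1 0 j]
  have TA0 : ∀ j, ∑ s ∈ Finset.Ico 0 (j+1), A s = y + ∑ s ∈ Finset.Ico 0 j, a s := by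
    intro j
    rw [sum_Ico_bot A (by omega), hA0, TA1 0 j]
  have SB2 : ∀ i j, ∑ s ∈ Finset.Icc (i+2) (j+2), B s = ∑ s ∈ Finset.Icc (i+1) (j+1), b s := by
    intro i j
    have : Finset.Icc (i+2) (j+2) = Finset.Icc ((i+1)+1) ((j+1)+1) := rfl
    rw [this, sum_Icc_shift]
    refine Finset.sum_congr rfl fun s hs => ?_
    rw [Finset.mem_Icc] at hs
    obtain ⟨t, rfl⟩ : ∃ t, s = t + 1 := ⟨s - 1, by omega⟩
    exact hBs t
  have SB1 : ∀ j, ∑ s ∈ Finset.Icc 1 (j+1), B s = (z - (a 0 - x)) + ∑ s ∈ Finset.Icc 0 j, b s := by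
    intro j
    have e0 : ∑ s ∈ Finset.Icc 1 (j+1), B s = B 1 + ∑ s ∈ Finset.Icc 2 (j+1), B s :=
      sum_Icc_bot B (by omega)
    have e1 : ∑ s ∈ Finset.Icc 2 (j+1), B s = ∑ s ∈ Finset.Icc 1 j, b s := by
      cases j with
      | zero =>
        rw [Finset.Icc_eq_empty (by omega), Finset.Icc_eq_empty (by omega),
          Finset.sum_empty, Finset.sum_empty]
      | succ t => exact SB2 0 t
    have e2 : ∑ s ∈ Finset.Icc 0 j, b s = b 0 + ∑ s ∈ Finset.Icc 1 j, b s :=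
      sum_Icc_bot b (Nat.zero_le _)
    rw [e0, e1, hB1, e2, p3]
    omega
  have SB0 : ∀ j, ∑ s ∈ Finset.Icc 0 (j+1), B s = (z - (a 0 - x)) + ∑ s ∈ Finset.Icc 0 j, b s := by
    intro j
    rw [sum_Icc_bot B (Nat.zero_le _), hB0, Nat.zero_add, SB1 j]
  refine ⟨?_, ?_, hB0, ?_, ?_, ?_, ?_, ?_, ?_, ?_, ?_, ?_⟩
  · rintro (_|i)
    · omega
    · rw [hAs i]; exact le_trans (p1 i) (by omega)
  · rintro (_|_|i)
    · omega
    · rw [hB1]; omega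
    · rw [hBs i]; exact le_trans (p2 (i+1)) (by omega)
  · rintro (_|i) hi
    · omega
    · rw [hAs i]; exact p4 i (by omega)
  · rintro (_|_|i) hi
    · omega
    · omega
    · rw [hBs i]; exact p5 (i+1) (by omega)
  · rw [hA0]; omega
  · rintro (_|i)
    · rw [hA0, hB1]
      have h1 := hAs 0
      have := p1 0
      omega
    · rw [hAs i, hAs (i+1), hBs i]
      exact le_trans (p7 i) (by omega)
  · rintro (_|_|i)
    · rw [hB0, hA0, hB1]; omega
    · rw [hB1, hAs 0]
      have h2 : B 2 = b 1 := hBs 0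
      rw [h2]
      have := p6
      omega
    · rw [hBs i, hBs (i+1), hAs (i+1)]
      exact le_trans (p8 (i+1)) (by omega)
  · -- condition (C)
    intro i j hij
    rcases Nat.lt_or_ge j 2 with hj | hj
    · obtain rfl : j = 1 := by omega
      obtain rfl : i = 0 := by omega
      show ∑ s ∈ Finset.Icc 0 1, B s ≤ k + ∑ s ∈ Finset.Ico 1 0, A s
      rw [s01 B, hB0, hB1]
      omega
    · obtain ⟨j', rfl⟩ : ∃ t, j = t + 2 := ⟨j - 2, by omega⟩
      have key : ∑ s ∈ Finset.Icc 1 (j'+2), B s ≤ k + ∑ s ∈ Finset.Ico 2 (j'+1), A s := by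
        have e : ∑ s ∈ Finset.Icc 1 (j'+2), B s
            = (z - (a 0 - x)) + ∑ s ∈ Finset.Icc 0 (j'+1), b s := SB1 (j'+1)
        rw [e]
        rcases j' with _|j''
        · show (z - (a 0 - x)) + ∑ s ∈ Finset.Icc 0 1, b s ≤ k + ∑ s ∈ Finset.Ico 2 1, A s
          rw [s01 b, p3, Finset.Ico_eq_empty (by omega), Finset.sum_empty]
          omega
        · show (z - (a 0 - x)) + ∑ s ∈ Finset.Icc 0 (j''+2), b s
            ≤ k + ∑ s ∈ Finset.Ico 2 (j''+2), A s
          have e2 : ∑ s ∈ Finset.Ico 2 (j''+2), A s = ∑ s ∈ Finset.Ico 1 (j''+1), a s :=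
            TA1 1 (j''+1)
          have h10 : l' + ∑ s ∈ Finset.Icc 0 (j''+2), b s ≤ k + ∑ s ∈ Finset.Ico 0 (j''+1), a s :=
            p10 (j''+2)
          have e3 : ∑ s ∈ Finset.Ico 0 (j''+1), a s = a 0 + ∑ s ∈ Finset.Ico 1 (j''+1), a s :=
            sum_Ico_bot a (by omega)
          rw [e2]
          omega
      rcases Nat.lt_or_ge i 2 with hi | hi
      · interval_cases i
        · show ∑ s ∈ Finset.Icc 0 (j'+2), B s ≤ k + ∑ s ∈ Finset.Ico 1 (j'+1), A s
          have e : ∑ s ∈ Finset.Icc 0 (j'+2), B s = B 0 + ∑ s ∈ Finset.Icc 1 (j'+2), B s :=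
            sum_Icc_bot B (Nat.zero_le _)
          have mono : ∑ s ∈ Finset.Ico 2 (j'+1), A s ≤ ∑ s ∈ Finset.Ico 1 (j'+1), A s :=
            Finset.sum_le_sum_of_subset (Finset.Ico_subset_Ico (by omega) le_rfl)
          rw [e, hB0]
          omega
        · show ∑ s ∈ Finset.Icc 1 (j'+2), B s ≤ k + ∑ s ∈ Finset.Ico 2 (j'+1), A s
          exact key
      · obtain ⟨i', rfl⟩ : ∃ t, i = t + 2 := ⟨i - 2, by omega⟩
        show ∑ s ∈ Finset.Icc (i'+2) (j'+2), B s ≤ k + ∑ s ∈ Finset.Ico (i'+3) (j'+1), A s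
        have e : ∑ s ∈ Finset.Icc (i'+2) (j'+2), B s = ∑ s ∈ Finset.Icc (i'+1) (j'+1), b s :=
          SB2 i' j'
        have e2 : ∑ s ∈ Finset.Ico (i'+3) (j'+1), A s = ∑ s ∈ Finset.Ico (i'+2) j', a s :=
          TA1 (i'+2) j'
        have h9 : ∑ s ∈ Finset.Icc (i'+1) (j'+1), b s ≤ k + ∑ s ∈ Finset.Ico (i'+2) j', a s :=
          p9 (i'+1) (j'+1) (by omega)
        rw [e, e2]
        exact h9
  · -- condition (D)
    intro j
    rcases Nat.lt_or_ge j 2 with hj | hj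
    · interval_cases j
      · show l + ∑ s ∈ Finset.Icc 0 0, B s ≤ k + ∑ s ∈ Finset.Ico 0 0, A s
        rw [Finset.Icc_self, Finset.sum_singleton, hB0]
        omega
      · show l + ∑ s ∈ Finset.Icc 0 1, B s ≤ k + ∑ s ∈ Finset.Ico 0 0, A s
        rw [s01 B, hB0, hB1]
        omega
    · obtain ⟨j', rfl⟩ : ∃ t, j = t + 2 := ⟨j - 2, by omega⟩
      show l + ∑ s ∈ Finset.Icc 0 (j'+2), B s ≤ k + ∑ s ∈ Finset.Ico 0 (j'+1), A s
      have e : ∑ s ∈ Finset.Icc 0 (j'+2), B s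
          = (z - (a 0 - x)) + ∑ s ∈ Finset.Icc 0 (j'+1), b s := SB0 (j'+1)
      have e2 : ∑ s ∈ Finset.Ico 0 (j'+1), A s = y + ∑ s ∈ Finset.Ico 0 j', a s := TA0 j'
      have h10 : l' + ∑ s ∈ Finset.Icc 0 (j'+1), b s ≤ k + ∑ s ∈ Finset.Ico 0 j', a s :=
        p10 (j'+1)
      rw [e, e2]
      omega
  · -- condition (E)
    intro i
    rcases Nat.lt_or_ge i 2 with hi | hi
    · interval_cases i
      · show ∑ s ∈ Finset.Icc 0 (N+1), B s + k ≤ k + ∑ s ∈ Finset.Icc 1 (N+1), A s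
        have e : ∑ s ∈ Finset.Icc 0 (N+1), B s
            = (z - (a 0 - x)) + ∑ s ∈ Finset.Icc 0 N, b s := SB0 N
        have e2 : ∑ s ∈ Finset.Icc 1 (N+1), A s = ∑ s ∈ Finset.Icc 0 N, a s := SA1 0 N
        have h12 := p12
        rw [e, e2]
        omega
      · show ∑ s ∈ Finset.Icc 1 (N+1), B s + k ≤ k + ∑ s ∈ Finset.Icc 2 (N+1), A s
        have e : ∑ s ∈ Finset.Icc 1 (N+1), B s
            = (z - (a 0 - x)) + ∑ s ∈ Finset.Icc 0 N, b s := SB1 N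
        have e2 : ∑ s ∈ Finset.Icc 2 (N+1), A s = ∑ s ∈ Finset.Icc 1 N, a s := SA1 1 N
        have e3 : ∑ s ∈ Finset.Icc 0 N, a s = a 0 + ∑ s ∈ Finset.Icc 1 N, a s :=
          sum_Icc_bot a (Nat.zero_le N)
        have h12 := p12
        rw [e, e2]
        omega
    · obtain ⟨i', rfl⟩ : ∃ t, i = t + 2 := ⟨i - 2, by omega⟩
      obtain ⟨N', rfl⟩ : ∃ t, N = t + 1 := ⟨N - 1, by omega⟩
      show ∑ s ∈ Finset.Icc (i'+2) (N'+2), B s + k ≤ k + ∑ s ∈ Finset.Icc (i'+3) (N'+2), A s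
      have e : ∑ s ∈ Finset.Icc (i'+2) (N'+2), B s = ∑ s ∈ Finset.Icc (i'+1) (N'+1), b s :=
        SB2 i' N'
      have e2 : ∑ s ∈ Finset.Icc (i'+3) (N'+2), A s = ∑ s ∈ Finset.Icc (i'+2) (N'+1), a s :=
        SA1 (i'+2) (N'+1)
      have h11 : ∑ s ∈ Finset.Icc (i'+1) (N'+1), b s + k
          ≤ k + ∑ s ∈ Finset.Icc (i'+2) (N'+1), a s := p11 (i'+1)
      rw [e, e2]
      exact h11
  · -- condition (F)
    rw [SB0 N, SA0 N]
    have := p12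
    omega

lemma path_decomp {k l N : ℕ} {a b : ℕ → ℕ} (hN : 1 ≤ N)
    (hp : IsCombPath k l (N+1) a b) :
    ∃ μ ν, IsAdm k l μ ν ∧ yA l μ ν = a 0 ∧
      IsCombPath k ν N (fun i => a (i+1)) (fun i => if i = 0 then 0 else b (i+1)) ∧
      concatC l μ ν (fun i => a (i+1)) (fun i => if i = 0 then 0 else b (i+1)) = (a, b) := by
  obtain ⟨p1,p2,p3,p4,p5,p6,p7,p8,p9,p10,p11,p12⟩ := hp
  obtain ⟨M, rfl⟩ : ∃ m, N = m + 1 := ⟨N - 1, by omega⟩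
  set a' : ℕ → ℕ := fun i => a (i+1) with ha'
  set b' : ℕ → ℕ := fun i => if i = 0 then 0 else b (i+1) with hb'
  have ha's : ∀ i, a' i = a (i+1) := fun i => rfl
  have hb'0 : b' 0 = 0 := rfl
  have hb's : ∀ i, b' (i+1) = b (i+2) := fun i => by simp [hb']
  -- the triple data
  set Z : ℕ := b 1 + (a 1 - (l - a 0)) with hZ
  have s01 : ∀ g : ℕ → ℕ, ∑ s ∈ Finset.Icc 0 1, g s = g 0 + g 1 := by
    intro g
    rw [sum_Icc_bot g (by norm_num), Finset.Icc_self, Finset.sum_singleton]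
  have hD1 : l + b 1 ≤ k := by
    have h := p10 1
    rw [s01 b, p3] at h
    simpa using h
  have hD2 : l + (b 1 + b 2) ≤ k + a 0 := by
    have h := p10 2
    have e1 : ∑ s ∈ Finset.Icc 0 2, b s = b 0 + (b 1 + b 2) := by
      rw [sum_Icc_bot b (by norm_num), sum_Icc_bot b (by norm_num : (1:ℕ) ≤ 2),
        Finset.Icc_self, Finset.sum_singleton]
    have e2 : ∑ s ∈ Finset.Ico 0 1, a s = a 0 := by
      rw [Finset.sum_eq_sum_Ico_succ_bot (by norm_num), Finset.Ico_self, Finset.sum_empty,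
        Nat.add_zero]
    rw [e1, e2, p3] at h
    omega
  have hA0 : a 0 + b 1 + a 1 ≤ k := p7 0
  have hlev : (l - a 0) + a 0 + Z ≤ k := by omega
  have hadm : IsAdm k l (a 0 + Z) ((l - a 0) + Z) :=
    ⟨l - a 0, a 0, Z, by omega, by omega, rfl, rfl⟩
  obtain ⟨hxa, hya, hza, _⟩ := adm_x hadm
  have hyA : yA l (a 0 + Z) ((l - a 0) + Z) = a 0 := by omega
  have hxA : xA l (a 0 + Z) ((l - a 0) + Z) = l - a 0 := by omega
  have hzA : zA l (a 0 + Z) ((l - a 0) + Z) = Z := by omega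
  -- sum lemmas
  have SA' : ∀ i j, ∑ s ∈ Finset.Icc i j, a' s = ∑ s ∈ Finset.Icc (i+1) (j+1), a s :=
    fun i j => (sum_Icc_shift a i j).symm
  have TA' : ∀ i j, ∑ s ∈ Finset.Ico i j, a' s = ∑ s ∈ Finset.Ico (i+1) (j+1), a s :=
    fun i j => (sum_Ico_shift a i j).symm
  have SB' : ∀ i j, ∑ s ∈ Finset.Icc (i+1) (j+1), b' s = ∑ s ∈ Finset.Icc (i+2) (j+2), b s := by
    intro i j
    have h1 : ∑ s ∈ Finset.Icc (i+2) (j+2), b s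
        = ∑ s ∈ Finset.Icc (i+1) (j+1), (fun s => b (s+1)) s := sum_Icc_shift b (i+1) (j+1)
    have h2 : ∑ s ∈ Finset.Icc (i+1) (j+1), (fun s => b (s+1)) s
        = ∑ s ∈ Finset.Icc i j, (fun s => b (s+1+1)) s := sum_Icc_shift (fun s => b (s+1)) i j
    have h3 : ∑ s ∈ Finset.Icc (i+1) (j+1), b' s
        = ∑ s ∈ Finset.Icc i j, (fun s => b' (s+1)) s := sum_Icc_shift b' i j
    rw [h1, h2, h3]
    exact Finset.sum_congr rfl fun s _ => hb's s
  have SB'0 : ∀ j, ∑ s ∈ Finset.Icc 0 j, b' s = ∑ s ∈ Finset.Icc 2 (j+1), b s := by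
    intro j
    cases j with
    | zero =>
      rw [Finset.Icc_self, Finset.sum_singleton, hb'0, Finset.Icc_eq_empty (by omega),
        Finset.sum_empty]
    | succ t =>
      rw [sum_Icc_bot b' (Nat.zero_le _), hb'0, Nat.zero_add]
      exact SB' 0 t
  refine ⟨a 0 + Z, (l - a 0) + Z, hadm, hyA, ?_, ?_⟩
  · -- IsCombPath for the truncated path
    refine ⟨fun i => p1 (i+1), ?_, hb'0, fun i hi => p4 (i+1) (by omega),
      fun i hi => ?_, ?_, fun i => ?_, ?_, ?_, ?_, ?_, ?_⟩
    · rintro (_|i)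
      · rw [hb'0]; omega
      · rw [hb's i]; exact p2 (i+2)
    · rcases i with _|i
      · omega
      · rw [hb's i]; exact p5 (i+2) (by omega)
    · show a 1 ≤ (l - a 0) + Z
      omega
    · rw [ha's i, ha's (i+1), hb's i]
      exact p7 (i+1)
    · rintro (_|i)
      · have e1 : a' 0 = a 1 := rfl
        have e2 : b' 1 = b 2 := rfl
        have h7 : a 1 + b 2 + a 2 ≤ k := p7 1
        rw [hb'0, e1, e2]
        omega
      · rw [hb's i, hb's (i+1), ha's (i+1)]
        exact p8 (i+2)
    · -- condition (C) for truncated path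
      intro i j hij
      rcases i with _|i'
      · -- i = 0
        obtain ⟨j', rfl⟩ : ∃ t, j = t + 1 := ⟨j - 1, by omega⟩
        rcases j' with _|j''
        · show ∑ s ∈ Finset.Icc 0 1, b' s ≤ k + ∑ s ∈ Finset.Ico 1 0, a' s
          have e2 : b' 1 = b 2 := rfl
          have hb2 : b 2 ≤ k := p2 2
          rw [s01 b', hb'0, e2]
          omega
        · show ∑ s ∈ Finset.Icc 0 (j''+2), b' s ≤ k + ∑ s ∈ Finset.Ico 1 (j''+1), a' s
          have e : ∑ s ∈ Finset.Icc 0 (j''+2), b' s = ∑ s ∈ Finset.Icc 2 (j''+3), b s :=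
            SB'0 (j''+2)
          have e2 : ∑ s ∈ Finset.Ico 1 (j''+1), a' s = ∑ s ∈ Finset.Ico 2 (j''+2), a s :=
            TA' 1 (j''+1)
          have mono : ∑ s ∈ Finset.Icc 2 (j''+3), b s ≤ ∑ s ∈ Finset.Icc 1 (j''+3), b s :=
            Finset.sum_le_sum_of_subset (Finset.Icc_subset_Icc (by omega) le_rfl)
          have h9 : ∑ s ∈ Finset.Icc 1 (j''+3), b s ≤ k + ∑ s ∈ Finset.Ico 2 (j''+2), a s :=
            p9 1 (j''+3) (by omega)
          rw [e, e2]
          omega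
      · -- i = i'+1
        obtain ⟨j', rfl⟩ : ∃ t, j = t + 1 := ⟨j - 1, by omega⟩
        show ∑ s ∈ Finset.Icc (i'+1) (j'+1), b' s ≤ k + ∑ s ∈ Finset.Ico (i'+2) j', a' s
        have e : ∑ s ∈ Finset.Icc (i'+1) (j'+1), b' s = ∑ s ∈ Finset.Icc (i'+2) (j'+2), b s :=
          SB' i' j'
        have e2 : ∑ s ∈ Finset.Ico (i'+2) j', a' s = ∑ s ∈ Finset.Ico (i'+3) (j'+1), a s :=
          TA' (i'+2) j'
        have h9 : ∑ s ∈ Finset.Icc (i'+2) (j'+2), b s ≤ k + ∑ s ∈ Finset.Ico (i'+3) (j'+1), a s :=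
          p9 (i'+2) (j'+2) (by omega)
        rw [e, e2]
        exact h9
    · -- condition (D) for truncated path
      intro j
      rcases j with _|j'
      · show (l - a 0) + Z + ∑ s ∈ Finset.Icc 0 0, b' s ≤ k + ∑ s ∈ Finset.Ico 0 0, a' s
        rw [Finset.Icc_self, Finset.sum_singleton, hb'0]
        omega
      · rcases j' with _|j''
        · -- j = 1
          show (l - a 0) + Z + ∑ s ∈ Finset.Icc 0 1, b' s ≤ k + ∑ s ∈ Finset.Ico 0 0, a' s
          have e2 : b' 1 = b 2 := rfl
          have h8 : b 1 + a 1 + b 2 ≤ k := p8 1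
          rw [s01 b', hb'0, e2]
          omega
        · -- j = j''+2
          show (l - a 0) + Z + ∑ s ∈ Finset.Icc 0 (j''+2), b' s
            ≤ k + ∑ s ∈ Finset.Ico 0 (j''+1), a' s
          have e : ∑ s ∈ Finset.Icc 0 (j''+2), b' s = ∑ s ∈ Finset.Icc 2 (j''+3), b s :=
            SB'0 (j''+2)
          have e2 : ∑ s ∈ Finset.Ico 0 (j''+1), a' s = ∑ s ∈ Finset.Ico 1 (j''+2), a s :=
            TA' 0 (j''+1)
          have h10 : l + ∑ s ∈ Finset.Icc 0 (j''+3), b s ≤ k + ∑ s ∈ Finset.Ico 0 (j''+2), a s :=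
            p10 (j''+3)
          have sp1 : ∑ s ∈ Finset.Icc 0 (j''+3), b s = b 0 + ∑ s ∈ Finset.Icc 1 (j''+3), b s :=
            sum_Icc_bot b (Nat.zero_le _)
          have sp2 : ∑ s ∈ Finset.Icc 1 (j''+3), b s = b 1 + ∑ s ∈ Finset.Icc 2 (j''+3), b s :=
            sum_Icc_bot b (by omega)
          have sp3 : ∑ s ∈ Finset.Ico 0 (j''+2), a s = a 0 + ∑ s ∈ Finset.Ico 1 (j''+2), a s :=
            sum_Ico_bot a (by omega)
          have sp4 : ∑ s ∈ Finset.Ico 1 (j''+2), a s = a 1 + ∑ s ∈ Finset.Ico 2 (j''+2), a s :=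
            sum_Ico_bot a (by omega)
          have h9 : ∑ s ∈ Finset.Icc 1 (j''+3), b s ≤ k + ∑ s ∈ Finset.Ico 2 (j''+2), a s :=
            p9 1 (j''+3) (by omega)
          rw [e, e2, p3] at *
          omega
    · -- condition (E) for truncated path
      intro i
      rcases i with _|i'
      · show ∑ s ∈ Finset.Icc 0 (M+1), b' s + k ≤ k + ∑ s ∈ Finset.Icc 1 (M+1), a' s
        have e : ∑ s ∈ Finset.Icc 0 (M+1), b' s = ∑ s ∈ Finset.Icc 2 (M+2), b s := SB'0 (M+1)
        have e2 : ∑ s ∈ Finset.Icc 1 (M+1), a' s = ∑ s ∈ Finset.Icc 2 (M+2), a s := SA' 1 (M+1)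
        have mono : ∑ s ∈ Finset.Icc 2 (M+2), b s ≤ ∑ s ∈ Finset.Icc 1 (M+2), b s :=
          Finset.sum_le_sum_of_subset (Finset.Icc_subset_Icc (by omega) le_rfl)
        have h11 : ∑ s ∈ Finset.Icc 1 (M+2), b s + k ≤ k + ∑ s ∈ Finset.Icc 2 (M+2), a s :=
          p11 1
        rw [e, e2]
        omega
      · show ∑ s ∈ Finset.Icc (i'+1) (M+1), b' s + k ≤ k + ∑ s ∈ Finset.Icc (i'+2) (M+1), a' s
        have e : ∑ s ∈ Finset.Icc (i'+1) (M+1), b' s = ∑ s ∈ Finset.Icc (i'+2) (M+2), b s :=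
          SB' i' M
        have e2 : ∑ s ∈ Finset.Icc (i'+2) (M+1), a' s = ∑ s ∈ Finset.Icc (i'+3) (M+2), a s :=
          SA' (i'+2) (M+1)
        have h11 : ∑ s ∈ Finset.Icc (i'+2) (M+2), b s + k ≤ k + ∑ s ∈ Finset.Icc (i'+3) (M+2), a s :=
          p11 (i'+2)
        rw [e, e2]
        exact h11
    · -- condition (F) for truncated path
      show (l - a 0) + Z + ∑ s ∈ Finset.Icc 0 (M+1), b' s + k
        ≤ k + ∑ s ∈ Finset.Icc 0 (M+1), a' s
      have e : ∑ s ∈ Finset.Icc 0 (M+1), b' s = ∑ s ∈ Finset.Icc 2 (M+2), b s := SB'0 (M+1)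
      have e2 : ∑ s ∈ Finset.Icc 0 (M+1), a' s = ∑ s ∈ Finset.Icc 1 (M+2), a s := SA' 0 (M+1)
      have sp1 : ∑ s ∈ Finset.Icc 0 (M+2), b s = b 0 + ∑ s ∈ Finset.Icc 1 (M+2), b s :=
        sum_Icc_bot b (Nat.zero_le _)
      have sp2 : ∑ s ∈ Finset.Icc 1 (M+2), b s = b 1 + ∑ s ∈ Finset.Icc 2 (M+2), b s :=
        sum_Icc_bot b (by omega)
      have sp3 : ∑ s ∈ Finset.Icc 0 (M+2), a s = a 0 + ∑ s ∈ Finset.Icc 1 (M+2), a s :=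
        sum_Icc_bot a (Nat.zero_le _)
      have sp4 : ∑ s ∈ Finset.Icc 1 (M+2), a s = a 1 + ∑ s ∈ Finset.Icc 2 (M+2), a s :=
        sum_Icc_bot a (by omega)
      have h11 : ∑ s ∈ Finset.Icc 1 (M+2), b s + k ≤ k + ∑ s ∈ Finset.Icc 2 (M+2), a s := p11 1
      have h12 : l + ∑ s ∈ Finset.Icc 0 (M+2), b s + k ≤ k + ∑ s ∈ Finset.Icc 0 (M+2), a s := p12
      rw [e, e2, p3] at *
      omega
  · -- the concatenation identity
    have h1 : (concatC l (a 0 + Z) ((l - a 0) + Z) a' b').1 = a := by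
      funext i
      rcases i with _|i
      · simpa [concatC] using hyA
      · simp [concatC, ha']
    have h2 : (concatC l (a 0 + Z) ((l - a 0) + Z) a' b').2 = b := by
      funext i
      rcases i with _|_|i
      · simp [concatC, p3]
      · simp only [concatC]
        norm_num
        have ha'0 : a' 0 = a 1 := rfl
        rw [ha'0, hxA, hzA]
        omega
      · simp [concatC, hb']
    exact Prod.ext h1 h2

lemma s01g (g : ℕ → ℕ) : ∑ s ∈ Finset.Icc 0 1, g s = g 0 + g 1 := by
  rw [sum_Icc_bot g (by norm_num), Finset.Icc_self, Finset.sum_singleton]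

lemma single_path {k w : ℕ} (hw : w ≤ k) :
    IsCombPath k w 1 (fun i => if i = 0 then w else 0) (fun _ => 0) := by
  refine ⟨?_, ?_, rfl, ?_, ?_, ?_, ?_, ?_, ?_, ?_, ?_, ?_⟩
  · intro i; by_cases hi : i = 0 <;> simp [hi] <;> omega
  · intro i; exact Nat.zero_le k
  · intro i hi; simp only []; rw [if_neg (by omega)]
  · intro i hi; rfl
  · simp
  · intro i; by_cases hi : i = 0 <;> simp [hi] <;> omega
  · intro i; by_cases hi : i = 0 <;> simp [hi] <;> omega
  · intro i j hij
    rw [Finset.sum_const_zero]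
    exact Nat.zero_le _
  · intro j
    rw [Finset.sum_const_zero]
    omega
  · intro i
    rw [Finset.sum_const_zero]
    omega
  · rw [Finset.sum_const_zero, s01g]
    show w + 0 + k ≤ k + (w + 0)
    omega

lemma main_split : ∀ N, 1 ≤ N → ∀ k₁ k₂ : ℕ, ∀ l l'' l' lA lA'' lA' lB lB'' lB' : ℕ,
    l = lA + lB → l'' = lA'' + lB'' → l' = lA' + lB' →
    IsAdm (k₁ + k₂) l l'' l' → IsAdm k₁ lA lA'' lA' → IsAdm k₂ lB lB'' lB' →
    ∀ a b, IsCombPath (k₁ + k₂) l' N a b →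
    ∃ aA bA aB bB, IsCombPath k₁ lA' N aA bA ∧ IsCombPath k₂ lB' N aB bB ∧
      aA + aB = a ∧ bA + bB = b ∧
      (concatC lA lA'' lA' aA bA).1 + (concatC lB lB'' lB' aB bB).1 =
        (concatC l l'' l' a b).1 ∧
      (concatC lA lA'' lA' aA bA).2 + (concatC lB lB'' lB' aB bB).2 =
        (concatC l l'' l' a b).2 := by
  intro N hN
  induction N, hN using Nat.le_induction with
  | base =>
    intro k₁ k₂ l l'' l' lA lA'' lA' lB lB'' lB' hl hl'' hl' hadm hadmA hadmB a b hp
    obtain ⟨hx0, hy0, hz0, hk0⟩ := adm_x hadm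
    obtain ⟨hx1, hy1, hz1, hk1⟩ := adm_x hadmA
    obtain ⟨hx2, hy2, hz2, hk2⟩ := adm_x hadmB
    obtain ⟨p1,p2,p3,p4,p5,p6,p7,p8,p9,p10,p11,p12⟩ := hp
    have ha1 : a 1 = 0 := p4 1 le_rfl
    have hb1 : b 1 = 0 := p5 1 le_rfl
    have ha0 : a 0 = l' := by
      have h12 := p12
      rw [s01g b, s01g a, p3, hb1, ha1] at h12
      omega
    refine ⟨fun i => if i = 0 then lA' else 0, fun _ => 0,
      fun i => if i = 0 then lB' else 0, fun _ => 0,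
      single_path (by omega), single_path (by omega), ?_, ?_, ?_, ?_⟩
    · funext i
      rcases i with _|i
      · show lA' + lB' = a 0
        omega
      · show 0 + 0 = a (i+1)
        have := p4 (i+1) (by omega)
        omega
    · funext i
      rcases i with _|i
      · show 0 + 0 = b 0
        omega
      · show 0 + 0 = b (i+1)
        have := p5 (i+1) (by omega)
        omega
    · funext i
      rcases i with _|i
      · show yA lA lA'' lA' + yA lB lB'' lB' = yA l l'' l'
        omega
      · show (if i = 0 then lA' else 0) + (if i = 0 then lB' else 0) = a i
        rcases i with _|i
        · show lA' + lB' = a 0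
          omega
        · show (0:ℕ) + 0 = a (i+1)
          have := p4 (i+1) (by omega)
          omega
    · funext i
      rcases i with _|_|i
      · show (0:ℕ) + 0 = 0
        rfl
      · show (zA lA lA'' lA' - (lA' - xA lA lA'' lA')) + (zA lB lB'' lB' - (lB' - xA lB lB'' lB'))
            = zA l l'' l' - (a 0 - xA l l'' l')
        omega
      · show (0:ℕ) + 0 = b (i+1)
        have := p5 (i+1) (by omega)
        omega
  | succ N hN IH =>
    intro k₁ k₂ l l'' l' lA lA'' lA' lB lB'' lB' hl hl'' hl' hadm hadmA hadmB a b hp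
    obtain ⟨hx0, hy0, hz0, hk0⟩ := adm_x hadm
    obtain ⟨hx1, hy1, hz1, hk1⟩ := adm_x hadmA
    obtain ⟨hx2, hy2, hz2, hk2⟩ := adm_x hadmB
    obtain ⟨μ, ν, hadmT, hyT, hP, hcat⟩ := path_decomp hN hp
    obtain ⟨βA, γA, βB, γB, hTA, hTB, hμ, hν, halign⟩ :=
      triple_split (pA := xA lA lA'' lA') (pB := xA lB lB'' lB') hadmT hl'
        (by omega) (by omega) (by omega) (by omega)
    obtain ⟨paA, pbA, paB, pbB, hPA, hPB, hsa, hsb, hc1, hc2⟩ :=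
      IH k₁ k₂ l' μ ν lA' βA γA lB' βB γB hl' hμ hν hadmT hTA hTB _ _ hP
    have hfst : (concatC lA' βA γA paA pbA).1 + (concatC lB' βB γB paB pbB).1 = a := by
      rw [hc1]
      exact congrArg Prod.fst hcat
    have hsnd : (concatC lA' βA γA paA pbA).2 + (concatC lB' βB γB paB pbB).2 = b := by
      rw [hc2]
      exact congrArg Prod.snd hcat
    obtain ⟨hxa1, hya1, hza1, _⟩ := adm_x hTA
    obtain ⟨hxa2, hya2, hza2, _⟩ := adm_x hTB
    obtain ⟨hxt, hyt, hzt, _⟩ := adm_x hadmT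
    refine ⟨(concatC lA' βA γA paA pbA).1, (concatC lA' βA γA paA pbA).2,
      (concatC lB' βB γB paB pbB).1, (concatC lB' βB γB paB pbB).2,
      concat_isPath hN hTA hPA, concat_isPath hN hTB hPB, hfst, hsnd, ?_, ?_⟩
    · funext i
      rcases i with _|i
      · show yA lA lA'' lA' + yA lB lB'' lB' = yA l l'' l'
        omega
      · show (concatC lA' βA γA paA pbA).1 i + (concatC lB' βB γB paB pbB).1 i = a i
        exact congrFun hfst i
    · funext i
      rcases i with _|_|i
      · show (0:ℕ) + 0 = 0
        rfl
      · show (zA lA lA'' lA' - ((concatC lA' βA γA paA pbA).1 0 - xA lA lA'' lA'))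
            + (zA lB lB'' lB' - ((concatC lB' βB γB paB pbB).1 0 - xA lB lB'' lB'))
            = zA l l'' l' - (a 0 - xA l l'' l')
        have e1 : (concatC lA' βA γA paA pbA).1 0 = yA lA' βA γA := rfl
        have e2 : (concatC lB' βB γB paB pbB).1 0 = yA lB' βB γB := rfl
        rw [e1, e2]
        omega
      · show (concatC lA' βA γA paA pbA).2 (i+1) + (concatC lB' βB γB paB pbB).2 (i+1) = b (i+1)
        exact congrFun hsnd (i+1)

/-- The componentwise addition map
`m_C : C^{(N)}_{k₁,l₁} × C^{(N)}_{k₂,l₂} → C^{(N)}_{k₁+k₂,l₁+l₂}` is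
well-defined and surjective; moreover any decomposition of an admissible
triple of level `k₁+k₂` into admissible triples of levels `k₁`, `k₂` can be
matched by a decomposition of a combinatorial path which is compatible with
the concatenation maps. -/
theorem stmt_2 (k₁ k₂ N : ℕ) (hk₁ : 1 ≤ k₁) (hk₂ : 1 ≤ k₂) (hN : 1 ≤ N) :
    (∀ l₁ l₂, l₁ ≤ k₁ → l₂ ≤ k₂ →
      (∀ a₁ b₁ a₂ b₂, IsCombPath k₁ l₁ N a₁ b₁ → IsCombPath k₂ l₂ N a₂ b₂ →
        IsCombPath (k₁ + k₂) (l₁ + l₂) N (a₁ + a₂) (b₁ + b₂)) ∧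
      (∀ a b, IsCombPath (k₁ + k₂) (l₁ + l₂) N a b →
        ∃ a₁ b₁ a₂ b₂, IsCombPath k₁ l₁ N a₁ b₁ ∧ IsCombPath k₂ l₂ N a₂ b₂ ∧
          a = a₁ + a₂ ∧ b = b₁ + b₂)) ∧
    (∀ l l'' l' lA lA'' lA' lB lB'' lB' : ℕ,
      l = lA + lB → l'' = lA'' + lB'' → l' = lA' + lB' →
      IsAdm (k₁ + k₂) l l'' l' → IsAdm k₁ lA lA'' lA' → IsAdm k₂ lB lB'' lB' →
      ∀ a b, IsCombPath (k₁ + k₂) l' N a b →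
      ∃ aA bA aB bB, IsCombPath k₁ lA' N aA bA ∧ IsCombPath k₂ lB' N aB bB ∧
        aA + aB = a ∧ bA + bB = b ∧
        (concatC lA lA'' lA' aA bA).1 + (concatC lB lB'' lB' aB bB).1 =
          (concatC l l'' l' a b).1 ∧
        (concatC lA lA'' lA' aA bA).2 + (concatC lB lB'' lB' aB bB).2 =
          (concatC l l'' l' a b).2) := by
  refine ⟨fun l₁ l₂ h₁ h₂ => ⟨fun a₁ b₁ a₂ b₂ hA hB => add_path hA hB, fun a b hp => ?_⟩, ?_⟩
  · have admA : IsAdm k₁ l₁ 0 l₁ := ⟨l₁, 0, 0, by omega, by omega, by omega, by omega⟩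
    have admB : IsAdm k₂ l₂ 0 l₂ := ⟨l₂, 0, 0, by omega, by omega, by omega, by omega⟩
    have admT : IsAdm (k₁+k₂) (l₁+l₂) 0 (l₁+l₂) :=
      ⟨l₁+l₂, 0, 0, by omega, by omega, by omega, by omega⟩
    obtain ⟨aA, bA, aB, bB, h1, h2, h3, h4, _, _⟩ :=
      main_split N hN k₁ k₂ (l₁+l₂) 0 (l₁+l₂) l₁ 0 l₁ l₂ 0 l₂ rfl rfl rfl admT admA admB a b hp
    exact ⟨aA, bA, aB, bB, h1, h2, h3.symm, h4.symm⟩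
  · intro l l'' l' lA lA'' lA' lB lB'' lB' hl hl'' hl' hadm hadmA hadmB a b hp
    exact main_split N hN k₁ k₂ l l'' l' lA lA'' lA' lB lB'' lB' hl hl'' hl' hadm hadmA hadmB
      a b hp
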